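/- Let n ≥ 2, a_0, …, a_n real, a ∈ (−1,1), r ≥ 0, and γ = a + i·√(1−a²). Define for real x the sequences z_n(x) = a_n, u_n(x) = a_n, and for k = n−1 down to 1: z_k(x) = 2(x−a)·u_{k+1}(x) + γ·z_{k+1}(x) + a_k and u_k(x) = z_k(x) + γ̄·u_{k+1}(x). Define e_n = 0, f_n = 0; for k = n−1 down to 1: f_k = 2r·|u_{k+1}(a)| + 2r·e_{k+1} + f_{k+1} and e_k = min(e_{k+1} + f_k, f_k/√(1−a²)); finally f_0 = r·|u_1(a)| + 2r·e_1 + f_1 and e_0 = min(e_1 + f_0, f_0/√(1−a²)). Then for every real x with |x − a| ≤ r, one has |p(x) − p(a)| ≤ e_0, where p(x) = ∑_{i=0}^n a_i T_i(x). -/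

import Mathlib

open Polynomial Finset Complex

lemma bcf_down (P : ℕ → Prop) (N : ℕ) (hbase : P N)
    (hstep : ∀ k, 1 ≤ k → k + 1 ≤ N → P (k+1) → P k) :
    ∀ k, 1 ≤ k → k ≤ N → P k := by
  intro k hk1 hk2
  obtain ⟨j, hj⟩ : ∃ j, k + j = N := ⟨N - k, by omega⟩
  induction j generalizing k with
  | zero => exact (by omega : k = N) ▸ hbase
  | succ j ih =>
    exact hstep k hk1 (by omega) (ih (k+1) (by omega) (by omega) (by omega))

lemma bcf_aux (s c : ℝ) (w : ℂ) (h : s^2 + c^2 = 1) :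
    |s * w.re + c * w.im| ≤ ‖w‖ := by
  rw [abs_le]
  have h1 := Complex.sq_norm w
  have h2 := Complex.normSq_apply w
  have h3 := norm_nonneg w
  constructor <;> nlinarith [sq_nonneg (s*w.im - c*w.re), sq_nonneg (‖w‖ + (s*w.re + c*w.im)), sq_nonneg (‖w‖ - (s*w.re + c*w.im))]

lemma bcf_abs_real (w : ℂ) (h : w.im = 0) : ‖w‖ = |w.re| := by
  rw [Complex.norm_def, Complex.normSq_apply, h, mul_zero, add_zero,
    Real.sqrt_mul_self_eq_abs]

lemma bcf_T (i : ℤ) (x : ℂ) : (Polynomial.Chebyshev.T ℂ (i+2)).eval x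
    = 2*x*(Polynomial.Chebyshev.T ℂ (i+1)).eval x
      - (Polynomial.Chebyshev.T ℂ i).eval x := by
  rw [Polynomial.Chebyshev.T_add_two]
  simp only [Polynomial.eval_sub, Polynomial.eval_mul, Polynomial.eval_ofNat, Polynomial.eval_X]
  try ring

set_option maxHeartbeats 1000000 in
/-- The ball Clenshaw algorithm (forward error analysis): the final radius `e₀`
bounds `|p(x) − p(a)|` on the interval `[a-r, a+r]`. -/
theorem ball_clenshaw_forward_correct (n : ℕ) (hn : 2 ≤ n) (a : ℕ → ℝ)
    (c : ℝ) (hc : c ∈ Set.Ioo (-1 : ℝ) 1) (r : ℝ) (hr : 0 ≤ r) (γ : ℂ)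
    (hγ : γ = (c : ℂ) + Complex.I * Real.sqrt (1 - c ^ 2))
    (z u : ℝ → ℕ → ℂ)
    (hzn : ∀ x, z x n = (a n : ℂ)) (hun : ∀ x, u x n = (a n : ℂ))
    (hrec : ∀ x, ∀ k, 1 ≤ k → k ≤ n - 1 →
      z x k = 2 * ((x : ℂ) - (c : ℂ)) * u x (k + 1) + γ * z x (k + 1) + (a k : ℂ) ∧
      u x k = z x k + (starRingEnd ℂ) γ * u x (k + 1))
    (e f : ℕ → ℝ) (hen : e n = 0) (hfn : f n = 0)
    (href : ∀ k, 1 ≤ k → k ≤ n - 1 →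
      f k = 2 * r * ‖u c (k + 1)‖ + 2 * r * e (k + 1) + f (k + 1) ∧
      e k = min (e (k + 1) + f k) (f k / Real.sqrt (1 - c ^ 2)))
    (hf0 : f 0 = r * ‖u c 1‖ + 2 * r * e 1 + f 1)
    (he0 : e 0 = min (e 1 + f 0) (f 0 / Real.sqrt (1 - c ^ 2))) :
    ∀ x : ℝ, |x - c| ≤ r →
      |(∑ i ∈ Finset.range (n + 1), a i * (Polynomial.Chebyshev.T ℝ i).eval x) -
        (∑ i ∈ Finset.range (n + 1), a i * (Polynomial.Chebyshev.T ℝ i).eval c)| ≤ e 0 := by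
  obtain ⟨m, rfl⟩ : ∃ m, n = m + 2 := ⟨n - 2, by omega⟩
  obtain ⟨hc1, hc2⟩ := hc
  set s : ℝ := Real.sqrt (1 - c ^ 2) with hs
  have hs2 : s ^ 2 = 1 - c ^ 2 := Real.sq_sqrt (by nlinarith)
  have hspos : 0 < s := Real.sqrt_pos.2 (by nlinarith)
  have hsle : s ≤ 1 := by nlinarith
  have hγre : γ.re = c := by rw [hγ]; simp
  have hγim : γ.im = s := by rw [hγ]; simp
  have hγsum : γ + (starRingEnd ℂ) γ = 2 * (c : ℂ) := by
    rw [Complex.ext_iff]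
    constructor <;> simp [hγre, hγim] <;> ring
  have hγprod : γ * (starRingEnd ℂ) γ = 1 := by
    rw [Complex.mul_conj, Complex.ext_iff]
    simp [Complex.normSq_apply, hγre, hγim]
    nlinarith
  have hγabs : ‖γ‖ = 1 := by
    have := Complex.sq_norm γ
    rw [Complex.normSq_apply, hγre, hγim] at this
    nlinarith [norm_nonneg γ]
  have hγcabs : ‖(starRingEnd ℂ) γ‖ = 1 := by
    rw [Complex.norm_conj]; exact hγabs
  -- z in terms of u
  have hzu : ∀ x k, 1 ≤ k → k ≤ m + 1 → z x k = u x k - (starRingEnd ℂ) γ * u x (k+1) := by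
    intro x k h1 h2
    have := (hrec x k h1 (by omega)).2
    linear_combination -this
  -- top recurrence
  have hAtop : ∀ x : ℝ, u x (m+1) = 2 * (x:ℂ) * (a (m+2) : ℂ) + (a (m+1) : ℂ) := by
    intro x
    obtain ⟨h1, h2⟩ := hrec x (m+1) (by omega) (by omega)
    rw [h2, h1, hzn, hun]
    linear_combination ((a (m+2) : ℂ)) * hγsum
  -- middle recurrence
  have hA : ∀ (x : ℝ) k, 1 ≤ k → k ≤ m →
      u x k = 2 * (x:ℂ) * u x (k+1) - u x (k+2) + (a k : ℂ) := by
    intro x k h1 h2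
    obtain ⟨h3, h4⟩ := hrec x k h1 (by omega)
    have h5 := hzu x (k+1) (by omega) (by omega)
    rw [h4, h3, h5]
    linear_combination (u x (k+1)) * hγsum - (u x (k+2)) * hγprod
  -- realness of u
  have hreal : ∀ k, 1 ≤ k → k ≤ m + 1 → ∀ x : ℝ, (u x k).im = 0 ∧ (u x (k+1)).im = 0 := by
    apply bcf_down
    · intro x
      refine ⟨?_, ?_⟩
      · rw [hAtop]; simp
      · rw [hun]; simp
    · intro k h1 h2 ih x
      obtain ⟨ih1, ih2⟩ := ih x
      refine ⟨?_, ih1⟩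
      rw [hA x k h1 (by omega)]
      simp [ih1, ih2]
  -- Clenshaw sum identity
  have hQ : ∀ k, 1 ≤ k → k ≤ m + 1 → ∀ x : ℝ,
      ∑ i ∈ Finset.Icc k (m+2), (a i : ℂ) * (Polynomial.Chebyshev.T ℂ (i:ℤ)).eval (x:ℂ)
        = u x k * (Polynomial.Chebyshev.T ℂ (k:ℤ)).eval (x:ℂ)
          - u x (k+1) * (Polynomial.Chebyshev.T ℂ ((k:ℤ)-1)).eval (x:ℂ) := by
    apply bcf_down
    · intro x
      rw [Finset.Icc_eq_cons_Ioc (by omega), Finset.sum_cons, ← Finset.Icc_add_one_left_eq_Ioc,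
        show m + 1 + 1 = m + 2 from rfl, Finset.Icc_self, Finset.sum_singleton, hun, hAtop]
      have hT := bcf_T (m : ℤ) (x:ℂ)
      push_cast
      try rw [show (m:ℤ) + 1 - 1 = (m:ℤ) by ring]
      try rw [show (m:ℤ) + 1 + 1 = (m:ℤ) + 2 by ring]
      linear_combination ((a (m+2) : ℂ)) * hT
    · intro k h1 h2 ih x
      rw [Finset.Icc_eq_cons_Ioc (by omega), Finset.sum_cons, ← Finset.Icc_add_one_left_eq_Ioc, ih x]
      have hT := bcf_T ((k:ℤ) - 1) (x:ℂ)
      have hAk := hA x k h1 (by omega)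
      rw [show (k:ℤ) - 1 + 2 = (k:ℤ) + 1 by ring, show (k:ℤ) - 1 + 1 = (k:ℤ) by ring] at hT
      push_cast
      try rw [show (k:ℤ) + 1 - 1 = (k:ℤ) by ring]
      linear_combination (-((Polynomial.Chebyshev.T ℂ (k:ℤ)).eval (x:ℂ))) * hAk
        + (u x (k+1)) * hT
  -- the polynomial in terms of u
  have hP : ∀ x : ℝ,
      Complex.ofReal (∑ i ∈ Finset.range (m+2+1), a i * (Polynomial.Chebyshev.T ℝ (i:ℤ)).eval x)
        = (a 0 : ℂ) + (x:ℂ) * u x 1 - u x 2 := by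
    intro x
    push_cast [Polynomial.Chebyshev.complex_ofReal_eval_T]
    rw [Finset.range_eq_Ico, Finset.Ico_add_one_right_eq_Icc,
      Finset.Icc_eq_cons_Ioc (by omega), Finset.sum_cons, ← Finset.Icc_add_one_left_eq_Ioc]
    have h := hQ 1 (by omega) (by omega) x
    rw [show ((1:ℕ):ℤ) = (1:ℤ) by norm_num, show ((1:ℤ))-1 = (0:ℤ) by ring] at h
    rw [Nat.zero_add, h]
    norm_num [Polynomial.Chebyshev.T_zero, Polynomial.Chebyshev.T_one]
    ring
  -- nonnegativity of the radii
  have hfe : ∀ k, 1 ≤ k → k ≤ m + 2 → 0 ≤ f k ∧ 0 ≤ e k := by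
    apply bcf_down
    · rw [hen, hfn]; exact ⟨le_refl 0, le_refl 0⟩
    · intro k h1 h2 ih
      obtain ⟨ihf, ihe⟩ := ih
      obtain ⟨hf, he⟩ := href k h1 (by omega)
      have hfk : 0 ≤ f k := by
        rw [hf]
        have := norm_nonneg (u c (k+1))
        nlinarith
      refine ⟨hfk, ?_⟩
      rw [he]
      exact le_min (by nlinarith) (div_nonneg hfk hspos.le)
  -- the error bounds
  have hR : ∀ k, 1 ≤ k → k ≤ m + 2 → ∀ x : ℝ, |x - c| ≤ r →
      ‖z x k - z c k‖ ≤ f k ∧ ‖u x k - u c k‖ ≤ e k := by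
    apply bcf_down
    · intro x hx
      rw [hzn, hzn, hun, hun, hen, hfn]
      simp
    · intro k h1 h2 ih x hx
      obtain ⟨ihz, ihu⟩ := ih x hx
      obtain ⟨hf, he⟩ := href k h1 (by omega)
      obtain ⟨hzx, hux⟩ := hrec x k h1 (by omega)
      obtain ⟨hzc, huc⟩ := hrec c k h1 (by omega)
      have habsx : ‖(x:ℂ) - (c:ℂ)‖ ≤ r := by
        rw [show ((x:ℂ) - (c:ℂ)) = Complex.ofReal (x - c) by push_cast; ring,
          Complex.norm_real, Real.norm_eq_abs]
        exact hx
      have huxb : ‖u x (k+1)‖ ≤ ‖u c (k+1)‖ + e (k+1) := by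
        have hid : u c (k+1) + (u x (k+1) - u c (k+1)) = u x (k+1) := by ring
        calc ‖u x (k+1)‖
            = ‖u c (k+1) + (u x (k+1) - u c (k+1))‖ := by rw [hid]
          _ ≤ ‖u c (k+1)‖ + ‖u x (k+1) - u c (k+1)‖ :=
              norm_add_le _ _
          _ ≤ ‖u c (k+1)‖ + e (k+1) := by linarith
      have hζ : z x k - z c k = 2*((x:ℂ)-(c:ℂ))*u x (k+1) + γ*(z x (k+1) - z c (k+1)) := by
        rw [hzx, hzc]; ring
      have hzb : ‖z x k - z c k‖ ≤ f k := by
        rw [hζ, hf]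
        calc ‖2*((x:ℂ)-(c:ℂ))*u x (k+1) + γ*(z x (k+1) - z c (k+1))‖
            ≤ ‖2*((x:ℂ)-(c:ℂ))*u x (k+1)‖
              + ‖γ*(z x (k+1) - z c (k+1))‖ := norm_add_le _ _
          _ = 2 * ‖(x:ℂ)-(c:ℂ)‖ * ‖u x (k+1)‖
              + ‖z x (k+1) - z c (k+1)‖ := by
              rw [norm_mul, norm_mul, norm_mul, hγabs, Complex.norm_two]; ring
          _ ≤ 2 * r * ‖u c (k+1)‖ + 2 * r * e (k+1) + f (k+1) := by
              have h0 := norm_nonneg ((x:ℂ)-(c:ℂ))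
              have h0' := norm_nonneg (u x (k+1))
              have h0'' := norm_nonneg (u c (k+1))
              nlinarith
      refine ⟨hzb, ?_⟩
      -- the u-error
      have hδeq : u x k - u c k = (z x k - z c k) + (starRingEnd ℂ) γ * (u x (k+1) - u c (k+1)) := by
        rw [hux, huc]; ring
      have hδ1 : ‖u x k - u c k‖ ≤ e (k+1) + f k := by
        rw [hδeq]
        calc ‖(z x k - z c k) + (starRingEnd ℂ) γ * (u x (k+1) - u c (k+1))‖
            ≤ ‖z x k - z c k‖
              + ‖(starRingEnd ℂ) γ * (u x (k+1) - u c (k+1))‖ := norm_add_le _ _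
          _ = ‖z x k - z c k‖ + ‖u x (k+1) - u c (k+1)‖ := by
              rw [norm_mul, hγcabs, one_mul]
          _ ≤ e (k+1) + f k := by linarith
      -- realness facts
      have hrx := hreal k h1 (by omega) x
      have hrc := hreal k h1 (by omega) c
      have hdim : (u x (k+1) - u c (k+1)).im = 0 := by
        rw [Complex.sub_im, hrx.2, hrc.2, sub_zero]
      have hδim : (u x k - u c k).im = 0 := by
        rw [Complex.sub_im, hrx.1, hrc.1, sub_zero]
      -- decompose
      set w : ℂ := z x k - z c k with hwdef
      set d : ℝ := (u x (k+1) - u c (k+1)).re with hddef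
      have him : w.im = s * d := by
        have := congrArg Complex.im hδeq
        rw [hδim, Complex.add_im, Complex.mul_im, Complex.conj_re, Complex.conj_im,
          hγre, hγim, hdim] at this
        linarith [this]
      have hre : (u x k - u c k).re = w.re + c * d := by
        have := congrArg Complex.re hδeq
        rw [Complex.add_re, Complex.mul_re, Complex.conj_re, Complex.conj_im,
          hγre, hγim, hdim] at this
        linarith [this]
      have hδ2 : ‖u x k - u c k‖ ≤ f k / s := by
        rw [bcf_abs_real _ hδim, hre]
        rw [le_div_iff₀ hspos]
        have haux := bcf_aux s c w (by linarith [hs2])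
        rw [him] at haux
        have h1 : s * w.re + c * (s * d) = (w.re + c * d) * s := by ring
        have this : |w.re + c * d| * s = |s * w.re + c * (s * d)| := by
          rw [h1, abs_mul, abs_of_pos hspos]
        rw [this]
        calc |s * w.re + c * (s * d)| ≤ ‖w‖ := haux
          _ ≤ f k := hzb
      rw [he]
      exact le_min hδ1 hδ2
  -- final assembly
  intro x hx
  obtain ⟨hz1, hu1⟩ := hR 1 (by omega) (by omega) x hx
  have hfe1 := hfe 1 (by omega) (by omega)
  have hu1b : ‖u x 1‖ ≤ ‖u c 1‖ + e 1 := by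
    have hid : u c 1 + (u x 1 - u c 1) = u x 1 := by ring
    calc ‖u x 1‖ = ‖u c 1 + (u x 1 - u c 1)‖ := by rw [hid]
      _ ≤ ‖u c 1‖ + ‖u x 1 - u c 1‖ := norm_add_le _ _
      _ ≤ ‖u c 1‖ + e 1 := by linarith
  set w : ℂ := ((x:ℂ) - (c:ℂ)) * u x 1 + γ * (z x 1 - z c 1) with hwdef
  have habsx : ‖(x:ℂ) - (c:ℂ)‖ ≤ r := by
    rw [show ((x:ℂ) - (c:ℂ)) = Complex.ofReal (x - c) by push_cast; ring, Complex.norm_real, Real.norm_eq_abs]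
    exact hx
  have hwb : ‖w‖ ≤ f 0 := by
    rw [hwdef, hf0]
    calc ‖((x:ℂ) - (c:ℂ)) * u x 1 + γ * (z x 1 - z c 1)‖
        ≤ ‖((x:ℂ) - (c:ℂ)) * u x 1‖ + ‖γ * (z x 1 - z c 1)‖ :=
          norm_add_le _ _
      _ = ‖(x:ℂ) - (c:ℂ)‖ * ‖u x 1‖ + ‖z x 1 - z c 1‖ := by
          rw [norm_mul, norm_mul, hγabs, one_mul]
      _ ≤ r * ‖u c 1‖ + 2 * r * e 1 + f 1 := by
          have h0 := norm_nonneg ((x:ℂ)-(c:ℂ))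
          have h0' := norm_nonneg (u x 1)
          have h0'' := norm_nonneg (u c 1)
          nlinarith
  -- the difference equals w.re
  have hkey : Complex.ofReal ((∑ i ∈ Finset.range (m+2+1), a i * (Polynomial.Chebyshev.T ℝ (i:ℤ)).eval x)
      - (∑ i ∈ Finset.range (m+2+1), a i * (Polynomial.Chebyshev.T ℝ (i:ℤ)).eval c))
      - w = (γ - (c:ℂ)) * (u c 1 - u x 1) := by
    have hPx := hP x
    have hPc := hP c
    have hz1x := hzu x 1 (by omega) (by omega)
    have hz1c := hzu c 1 (by omega) (by omega)
    rw [Complex.ofReal_sub, hPx, hPc, hwdef, hz1x, hz1c]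
    linear_combination (u x 2 - u c 2) * hγprod
  have hre0 : ((γ - (c:ℂ)) * (u c 1 - u x 1)).re = 0 := by
    have h1 := (hreal 1 (by omega) (by omega) x).1
    have h2 := (hreal 1 (by omega) (by omega) c).1
    rw [Complex.mul_re, Complex.sub_re, Complex.sub_im, Complex.sub_im, h1, h2,
      Complex.sub_re, hγre, Complex.ofReal_re, Complex.ofReal_im]
    simp
  have hdiff : (∑ i ∈ Finset.range (m+2+1), a i * (Polynomial.Chebyshev.T ℝ (i:ℤ)).eval x)
      - (∑ i ∈ Finset.range (m+2+1), a i * (Polynomial.Chebyshev.T ℝ (i:ℤ)).eval c) = w.re := by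
    have := congrArg Complex.re hkey
    rw [Complex.sub_re, Complex.ofReal_re, hre0] at this
    linarith [this]
  have hf0nn : 0 ≤ f 0 := le_trans (norm_nonneg w) hwb
  calc |(∑ i ∈ Finset.range (m+2+1), a i * (Polynomial.Chebyshev.T ℝ (i:ℤ)).eval x)
      - (∑ i ∈ Finset.range (m+2+1), a i * (Polynomial.Chebyshev.T ℝ (i:ℤ)).eval c)|
      = |w.re| := by rw [hdiff]
    _ ≤ ‖w‖ := Complex.abs_re_le_norm w
    _ ≤ f 0 := hwb
    _ ≤ e 0 := by
        rw [he0]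
        refine le_min (by linarith [hfe1.2]) ?_
        rw [le_div_iff₀ hspos]
        nlinarith
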